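/- For every n ≥ 2, let G_n be the graph with vertices x_1,…,x_n, y_1,…,y_n, z, u_1,…,u_n and edges {x_i,y_i}, {y_i,z}, {z,u_i} for 1 ≤ i ≤ n. Then: (i) for every ordering φ of V(G_n), the number of vertices accepted by Almost-GIS on φ(G_n) is at least the number of vertices accepted by GIS on φ(G_n) (both always produce independent sets); and (ii) there exists an ordering φ of V(G_n) on which Almost-GIS accepts strictly more vertices than GIS. -/

import Mathlib

namespace OnlinePaper

/-- A deterministic online algorithm in the vertex-arrival model: given the number `n` of
previously revealed vertices and the Boolean adjacency matrix on the `n + 1` revealed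
vertices (the newly revealed vertex has index `Fin.last n`), decide whether to accept the
newly revealed vertex.  The algorithm sees only this order-canonical information. -/
def OnlineAlg : Type := (n : ℕ) → (Fin (n + 1) → Fin (n + 1) → Bool) → Bool

/-- The complement algorithm `ĀLG`: it simulates `A` and accepts exactly the requests
that `A` rejects. -/
def coAlg (A : OnlineAlg) : OnlineAlg := fun n M => !(A n M)

variable {V : Type}

/-- The Boolean adjacency matrix on the first `i + 1` revealed vertices, when the graph `G`
is presented in the order `φ`. -/
noncomputable def revealedMatrix [Fintype V] (G : SimpleGraph V)
    (φ : Fin (Fintype.card V) ≃ V) (i : Fin (Fintype.card V)) :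
    Fin (i.val + 1) → Fin (i.val + 1) → Bool :=
  fun a b =>
    @decide (G.Adj (φ ⟨a.val, by have := a.isLt; have := i.isLt; omega⟩)
        (φ ⟨b.val, by have := b.isLt; have := i.isLt; omega⟩)) (Classical.propDecidable _)

/-- Whether the algorithm `A` accepts the vertex revealed at step `i` when the graph `G` is
presented in the order `φ`. -/
noncomputable def accepts [Fintype V] (A : OnlineAlg) (G : SimpleGraph V)
    (φ : Fin (Fintype.card V) ≃ V) (i : Fin (Fintype.card V)) : Bool :=
  A i.val (revealedMatrix G φ i)

/-- The set of vertices accepted by `A` when `G` is presented in the order `φ`. -/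
noncomputable def acceptedSet [Fintype V] (A : OnlineAlg) (G : SimpleGraph V)
    (φ : Fin (Fintype.card V) ≃ V) : Finset V :=
  Finset.univ.filter (fun v => accepts A G φ (φ.symm v) = true)

/-- `s` is an independent set of `G`. -/
def IsIndep (G : SimpleGraph V) (s : Finset V) : Prop := ∀ a ∈ s, ∀ b ∈ s, ¬ G.Adj a b

/-- `s` is a vertex cover of `G`. -/
def IsVC (G : SimpleGraph V) (s : Finset V) : Prop := ∀ a b : V, G.Adj a b → a ∈ s ∨ b ∈ s

/-- `s` is a dominating set of `G`. -/
def IsDom (G : SimpleGraph V) (s : Finset V) : Prop := ∀ v : V, v ∈ s ∨ ∃ u ∈ s, G.Adj u v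

/-- `s` is an inclusion-maximal independent set of `G`. -/
def IsMaxIndep [DecidableEq V] (G : SimpleGraph V) (s : Finset V) : Prop :=
  IsIndep G s ∧ ∀ v ∉ s, ¬ IsIndep G (insert v s)

/-- For maximization problems: the worst-case (minimum over orderings) number of requests
accepted by `A` on `G`. -/
noncomputable def minScore [Fintype V] (A : OnlineAlg) (G : SimpleGraph V) : ℕ :=
  sInf {m | ∃ φ : Fin (Fintype.card V) ≃ V, (acceptedSet A G φ).card = m}

/-- For minimization problems: the worst-case (maximum over orderings) number of requests
accepted by `A` on `G`. -/
noncomputable def maxScore [Fintype V] (A : OnlineAlg) (G : SimpleGraph V) : ℕ :=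
  sSup {m | ∃ φ : Fin (Fintype.card V) ≃ V, (acceptedSet A G φ).card = m}

/-- The online independence number `I^O(G)`: the largest `m` such that some online
algorithm accepts, on every ordering, an independent set of size at least `m`. -/
noncomputable def onlineIndepNum [Fintype V] (G : SimpleGraph V) : ℕ :=
  sSup {m | ∃ A : OnlineAlg, ∀ φ : Fin (Fintype.card V) ≃ V,
      IsIndep G (acceptedSet A G φ) ∧ m ≤ (acceptedSet A G φ).card}

/-- The online vertex cover number `V^O(G)`: the smallest `m` such that some online
algorithm accepts, on every ordering, a vertex cover of size at most `m`. -/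
noncomputable def onlineVCNum [Fintype V] (G : SimpleGraph V) : ℕ :=
  sInf {m | ∃ A : OnlineAlg, ∀ φ : Fin (Fintype.card V) ≃ V,
      IsVC G (acceptedSet A G φ) ∧ (acceptedSet A G φ).card ≤ m}

/-- The online domination number `D^O(G)`: the smallest `m` such that some online
algorithm accepts, on every ordering, a dominating set of size at most `m`. -/
noncomputable def onlineDomNum [Fintype V] (G : SimpleGraph V) : ℕ :=
  sInf {m | ∃ A : OnlineAlg, ∀ φ : Fin (Fintype.card V) ≃ V,
      IsDom G (acceptedSet A G φ) ∧ (acceptedSet A G φ).card ≤ m}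

/-- The greedy independent set decision: accept the newly revealed vertex iff none of its
previously revealed neighbors has been accepted (by the same greedy rule). -/
def gisAux : (n : ℕ) → (Fin (n + 1) → Fin (n + 1) → Bool) → Bool
  | n, M =>
    decide (∀ j : Fin n,
      gisAux j.val (fun a b => M (Fin.castLE (Nat.succ_le_succ j.isLt.le) a)
        (Fin.castLE (Nat.succ_le_succ j.isLt.le) b)) = true →
      M j.castSucc (Fin.last n) = false)
termination_by n => n
decreasing_by all_goals exact Fin.isLt _

/-- `GIS`, the greedy algorithm for Online Independent Set. -/
def gisAlg : OnlineAlg := fun n M => gisAux n M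

/-- `GDS`, the greedy algorithm for Online Dominating Set (the same algorithm as `GIS`). -/
def gdsAlg : OnlineAlg := gisAlg

/-- The greedy vertex cover decision: accept the newly revealed vertex iff it has a
previously revealed neighbor that was rejected (by the same greedy rule). -/
def gvcAux : (n : ℕ) → (Fin (n + 1) → Fin (n + 1) → Bool) → Bool
  | n, M =>
    decide (∃ j : Fin n,
      gvcAux j.val (fun a b => M (Fin.castLE (Nat.succ_le_succ j.isLt.le) a)
        (Fin.castLE (Nat.succ_le_succ j.isLt.le) b)) = false ∧
      M j.castSucc (Fin.last n) = true)
termination_by n => n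
decreasing_by all_goals exact Fin.isLt _

/-- `GVC`, the greedy algorithm for Online Vertex Cover. -/
def gvcAlg : OnlineAlg := fun n M => gvcAux n M

/-- `IS-STAR`: rejects the first vertex; rejects the second vertex if it is adjacent to the
first; rejects any later vertex having more than one previously revealed neighbor; accepts
every other vertex. -/
def isStarAlg : OnlineAlg := fun n M =>
  let c := (Finset.univ.filter (fun j : Fin n => M j.castSucc (Fin.last n) = true)).card
  if n = 0 then false
  else if n = 1 then decide (c = 0)
  else decide (c ≤ 1)

/-- `Almost-GIS`: identical to `GIS` except that it additionally rejects any revealed vertex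
having at least two previously revealed neighbors. -/
def almostGisAux : (n : ℕ) → (Fin (n + 1) → Fin (n + 1) → Bool) → Bool
  | n, M =>
    (decide (∀ j : Fin n,
      almostGisAux j.val (fun a b => M (Fin.castLE (Nat.succ_le_succ j.isLt.le) a)
        (Fin.castLE (Nat.succ_le_succ j.isLt.le) b)) = true →
      M j.castSucc (Fin.last n) = false)) &&
    decide ((Finset.univ.filter (fun j : Fin n => M j.castSucc (Fin.last n) = true)).card ≤ 1)
termination_by n => n
decreasing_by all_goals exact Fin.isLt _

/-- `Almost-GIS` as an online algorithm. -/
def almostGisAlg : OnlineAlg := fun n M => almostGisAux n M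

/-- The star graph `S_n`: a center `0` adjacent to `n` further vertices, and no other edges. -/
def starGraph (n : ℕ) : SimpleGraph (Fin (n + 1)) where
  Adj a b := a ≠ b ∧ (a = 0 ∨ b = 0)
  symm := ⟨fun _ _ h => ⟨h.1.symm, h.2.symm⟩⟩
  loopless := ⟨fun _ h => h.1 rfl⟩

/-- `v` is an isolated vertex of `G`. -/
def IsIsolated (G : SimpleGraph V) (v : V) : Prop := ∀ u : V, ¬ G.Adj v u

/-- `k(G)`: the number of isolated vertices of `G`. -/
noncomputable def numIsolated [Fintype V] (G : SimpleGraph V) : ℕ :=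
  Finset.card (@Finset.filter V (fun v => IsIsolated G v) (Classical.decPred _) Finset.univ)

/-- `G'`: the subgraph of `G` induced by the non-isolated vertices. -/
def inducedNonIsolated (G : SimpleGraph V) : SimpleGraph {v : V // ¬ IsIsolated G v} :=
  SimpleGraph.comap Subtype.val G

noncomputable instance {α : Type} [Fintype α] {p : α → Prop} : Fintype {v : α // p v} :=
  Fintype.ofFinite _

/-- The independent domination number: the minimum size of an inclusion-maximal independent
set of `G`. -/
noncomputable def indepDomNum [DecidableEq V] (G : SimpleGraph V) : ℕ :=
  sInf {m | ∃ s : Finset V, IsMaxIndep G s ∧ s.card = m}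

/-- The independence number `α(G)`: the maximum size of an independent set of `G`. -/
noncomputable def indepNum (G : SimpleGraph V) : ℕ :=
  sSup {m | ∃ s : Finset V, IsIndep G s ∧ s.card = m}

/-- `G` is a Freckle Graph: `k(G) + s(G') ≥ I^O(G')`. -/
noncomputable def IsFreckle [Fintype V] [DecidableEq V] (G : SimpleGraph V) : Prop :=
  onlineIndepNum (inducedNonIsolated G) ≤ numIsolated G + indepDomNum (inducedNonIsolated G)


/-! ### The graphs of Theorem `agi` -/

/-- The vertex type of the graph `G_n`: `x_i = inl (inl i)`, `y_i = inl (inr (inl i))`,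
`u_i = inl (inr (inr i))`, and `z = inr ()`. -/
abbrev GnVertex (n : ℕ) : Type := (Fin n ⊕ Fin n ⊕ Fin n) ⊕ Unit

/-- The (oriented) edges of `G_n`: `x_i — y_i`, `y_i — z` and `z — u_i`. -/
def gnRel (n : ℕ) (a b : GnVertex n) : Prop :=
  (∃ i : Fin n, a = Sum.inl (Sum.inl i) ∧ b = Sum.inl (Sum.inr (Sum.inl i))) ∨
  (∃ i : Fin n, a = Sum.inl (Sum.inr (Sum.inl i)) ∧ b = Sum.inr ()) ∨
  (∃ i : Fin n, a = Sum.inr () ∧ b = Sum.inl (Sum.inr (Sum.inr i)))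

/-- The graph `G_n` with vertices `x_1, …, x_n, y_1, …, y_n, z, u_1, …, u_n` and edges
`{x_i, y_i}`, `{y_i, z}`, `{z, u_i}` for `1 ≤ i ≤ n`. -/
def gnGraph (n : ℕ) : SimpleGraph (GnVertex n) where
  Adj a b := gnRel n a b ∨ gnRel n b a
  symm := ⟨fun _ _ h => h.symm⟩
  loopless := by
    refine ⟨?_⟩
    intro a h
    rcases h with h | h <;>
      rcases h with ⟨i, h1, h2⟩ | ⟨i, h1, h2⟩ | ⟨i, h1, h2⟩ <;> subst h1 <;> simp_all


section Aux
variable {V : Type} [Fintype V]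

lemma rm_true (G : SimpleGraph V) (φ : Fin (Fintype.card V) ≃ V)
    (i : Fin (Fintype.card V)) (a b : Fin (i.val + 1))
    (pa : a.val < Fintype.card V) (pb : b.val < Fintype.card V) :
    revealedMatrix G φ i a b = true ↔ G.Adj (φ ⟨a.val, pa⟩) (φ ⟨b.val, pb⟩) := by
  simp only [revealedMatrix, decide_eq_true_eq]

lemma accepts_gis_iff (G : SimpleGraph V) (φ : Fin (Fintype.card V) ≃ V)
    (i : Fin (Fintype.card V)) :
    accepts gisAlg G φ i = true ↔
      ∀ j : Fin (Fintype.card V), j < i → accepts gisAlg G φ j = true →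
        ¬ G.Adj (φ j) (φ i) := by
  show gisAux i.val (revealedMatrix G φ i) = true ↔ _
  rw [gisAux, decide_eq_true_eq]
  constructor
  · intro h j hj hacc hadj
    have h2 := h ⟨j.val, hj⟩ hacc
    have h3 : revealedMatrix G φ i (Fin.castSucc ⟨j.val, hj⟩) (Fin.last i.val) = true :=
      (rm_true G φ i (Fin.castSucc ⟨j.val, hj⟩) (Fin.last i.val) j.isLt i.isLt).mpr hadj
    rw [h2] at h3
    exact Bool.false_ne_true h3
  · intro h j hacc
    have := h ⟨j.val, j.isLt.trans i.isLt⟩ j.isLt hacc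
    have : ¬ (revealedMatrix G φ i j.castSucc (Fin.last i.val) = true) := by
      rw [rm_true G φ i _ _ (j.isLt.trans i.isLt) i.isLt]; exact this
    exact Bool.not_eq_true _ ▸ this

lemma accepts_almost_iff (G : SimpleGraph V) (φ : Fin (Fintype.card V) ≃ V)
    (i : Fin (Fintype.card V)) :
    accepts almostGisAlg G φ i = true ↔
      ((∀ j : Fin (Fintype.card V), j < i → accepts almostGisAlg G φ j = true →
        ¬ G.Adj (φ j) (φ i)) ∧
       (∀ j k : Fin (Fintype.card V), j < i → k < i → G.Adj (φ j) (φ i) →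
        G.Adj (φ k) (φ i) → j = k)) := by
  show almostGisAux i.val (revealedMatrix G φ i) = true ↔ _
  rw [almostGisAux, Bool.and_eq_true, decide_eq_true_eq, decide_eq_true_eq]
  constructor
  · rintro ⟨h, hc⟩
    constructor
    · intro j hj hacc hadj
      have h2 := h ⟨j.val, hj⟩ hacc
      have h3 : revealedMatrix G φ i (Fin.castSucc ⟨j.val, hj⟩) (Fin.last i.val) = true :=
        (rm_true G φ i (Fin.castSucc ⟨j.val, hj⟩) (Fin.last i.val) j.isLt i.isLt).mpr hadj
      rw [h2] at h3
      exact Bool.false_ne_true h3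
    · intro j k hj hk hadjj hadjk
      rw [Finset.card_le_one] at hc
      have := hc ⟨j.val, hj⟩ (Finset.mem_filter.mpr ⟨Finset.mem_univ _,
          (rm_true G φ i (Fin.castSucc ⟨j.val, hj⟩) (Fin.last i.val) j.isLt i.isLt).mpr hadjj⟩)
        ⟨k.val, hk⟩ (Finset.mem_filter.mpr ⟨Finset.mem_univ _,
          (rm_true G φ i (Fin.castSucc ⟨k.val, hk⟩) (Fin.last i.val) k.isLt i.isLt).mpr hadjk⟩)
      exact Fin.ext (show j.val = k.val by injection this)
  · rintro ⟨h, hc⟩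
    constructor
    · intro j hacc
      have := h ⟨j.val, j.isLt.trans i.isLt⟩ j.isLt hacc
      have h4 : ¬ (revealedMatrix G φ i j.castSucc (Fin.last i.val) = true) := by
        rw [rm_true G φ i _ _ (j.isLt.trans i.isLt) i.isLt]; exact this
      exact Bool.not_eq_true _ ▸ h4
    · rw [Finset.card_le_one]
      intro a ha b hb
      have ha' := (rm_true G φ i (Fin.castSucc a) (Fin.last i.val)
        (a.isLt.trans i.isLt) i.isLt).mp (Finset.mem_filter.mp ha).2
      have hb' := (rm_true G φ i (Fin.castSucc b) (Fin.last i.val)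
        (b.isLt.trans i.isLt) i.isLt).mp (Finset.mem_filter.mp hb).2
      have := hc ⟨a.val, a.isLt.trans i.isLt⟩ ⟨b.val, b.isLt.trans i.isLt⟩ a.isLt b.isLt ha' hb'
      exact Fin.ext (show a.val = b.val by injection this)


lemma mem_acceptedSet_iff (A : OnlineAlg) (G : SimpleGraph V) (φ : Fin (Fintype.card V) ≃ V)
    (v : V) : v ∈ acceptedSet A G φ ↔ accepts A G φ (φ.symm v) = true := by
  simp [acceptedSet]

lemma indep_of_rec (A : OnlineAlg) (G : SimpleGraph V) (φ : Fin (Fintype.card V) ≃ V)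
    (hrec : ∀ i : Fin (Fintype.card V), accepts A G φ i = true →
      ∀ j, j < i → accepts A G φ j = true → ¬ G.Adj (φ j) (φ i)) :
    IsIndep G (acceptedSet A G φ) := by
  intro a ha b hb hadj
  rw [mem_acceptedSet_iff] at ha hb
  rcases lt_trichotomy (φ.symm a) (φ.symm b) with h | h | h
  · exact hrec (φ.symm b) hb (φ.symm a) h ha (by simpa using hadj)
  · have hab : a = b := φ.symm.injective h
    exact G.loopless.irrefl b (hab ▸ hadj)
  · exact hrec (φ.symm a) ha (φ.symm b) h hb (by simpa using hadj.symm)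

end Aux

section Gn
variable {n : ℕ}

def xv (n : ℕ) (i : Fin n) : GnVertex n := Sum.inl (Sum.inl i)
def yv (n : ℕ) (i : Fin n) : GnVertex n := Sum.inl (Sum.inr (Sum.inl i))
def uv (n : ℕ) (i : Fin n) : GnVertex n := Sum.inl (Sum.inr (Sum.inr i))
def zv (n : ℕ) : GnVertex n := Sum.inr ()

lemma vertex_cases (v : GnVertex n) :
    (∃ i, v = xv n i) ∨ (∃ i, v = yv n i) ∨ (∃ i, v = uv n i) ∨ v = zv n := by
  rcases v with ((i | (i | i)) | u)
  · exact Or.inl ⟨i, rfl⟩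
  · exact Or.inr (Or.inl ⟨i, rfl⟩)
  · exact Or.inr (Or.inr (Or.inl ⟨i, rfl⟩))
  · exact Or.inr (Or.inr (Or.inr rfl))

lemma adj_x (i : Fin n) (v : GnVertex n) : (gnGraph n).Adj (xv n i) v ↔ v = yv n i := by
  constructor
  · intro h
    have h2 : gnRel n (xv n i) v ∨ gnRel n v (xv n i) := h
    simp only [gnRel, xv, yv, uv, zv] at h2
    rcases h2 with (⟨j,h1,hh⟩|⟨j,h1,hh⟩|⟨j,h1,hh⟩)|(⟨j,h1,hh⟩|⟨j,h1,hh⟩|⟨j,h1,hh⟩) <;>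
      simp_all [xv, yv, uv, zv]
  · rintro rfl
    exact Or.inl (Or.inl ⟨i, rfl, rfl⟩)

lemma adj_u (i : Fin n) (v : GnVertex n) : (gnGraph n).Adj (uv n i) v ↔ v = zv n := by
  constructor
  · intro h
    have h2 : gnRel n (uv n i) v ∨ gnRel n v (uv n i) := h
    simp only [gnRel, xv, yv, uv, zv] at h2
    rcases h2 with (⟨j,h1,hh⟩|⟨j,h1,hh⟩|⟨j,h1,hh⟩)|(⟨j,h1,hh⟩|⟨j,h1,hh⟩|⟨j,h1,hh⟩) <;>
      simp_all [xv, yv, uv, zv]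
  · rintro rfl
    exact Or.inr (Or.inr (Or.inr ⟨i, rfl, rfl⟩))

lemma adj_y (i : Fin n) (v : GnVertex n) :
    (gnGraph n).Adj (yv n i) v ↔ v = xv n i ∨ v = zv n := by
  constructor
  · intro h
    have h2 : gnRel n (yv n i) v ∨ gnRel n v (yv n i) := h
    simp only [gnRel, xv, yv, uv, zv] at h2
    rcases h2 with (⟨j,h1,hh⟩|⟨j,h1,hh⟩|⟨j,h1,hh⟩)|(⟨j,h1,hh⟩|⟨j,h1,hh⟩|⟨j,h1,hh⟩) <;>
      simp_all [xv, yv, uv, zv]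
  · rintro (rfl | rfl)
    · exact Or.inr (Or.inl ⟨i, rfl, rfl⟩)
    · exact Or.inl (Or.inr (Or.inl ⟨i, rfl, rfl⟩))

lemma adj_z (v : GnVertex n) :
    (gnGraph n).Adj (zv n) v ↔ (∃ i, v = yv n i) ∨ (∃ i, v = uv n i) := by
  constructor
  · intro h
    have h2 : gnRel n (zv n) v ∨ gnRel n v (zv n) := h
    simp only [gnRel, xv, yv, uv, zv] at h2
    rcases h2 with (⟨j,h1,hh⟩|⟨j,h1,hh⟩|⟨j,h1,hh⟩)|(⟨j,h1,hh⟩|⟨j,h1,hh⟩|⟨j,h1,hh⟩) <;>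
      simp_all [xv, yv, uv, zv]
  · rintro (⟨i, rfl⟩ | ⟨i, rfl⟩)
    · exact Or.inr (Or.inr (Or.inl ⟨i, rfl, rfl⟩))
    · exact Or.inl (Or.inr (Or.inr ⟨i, rfl, rfl⟩))


lemma key (n : ℕ) (hn : 2 ≤ n) (φ : Fin (Fintype.card (GnVertex n)) ≃ GnVertex n)
    (hdiv : ∃ i, accepts gisAlg (gnGraph n) φ i ≠ accepts almostGisAlg (gnGraph n) φ i) :
    (acceptedSet gisAlg (gnGraph n) φ).card <
      (acceptedSet almostGisAlg (gnGraph n) φ).card := by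
  classical
  obtain ⟨i0, hi0mem, hi0min⟩ := Finset.exists_min_image
    (Finset.univ.filter fun i =>
      accepts gisAlg (gnGraph n) φ i ≠ accepts almostGisAlg (gnGraph n) φ i) id
    (by obtain ⟨i, hi⟩ := hdiv; exact ⟨i, Finset.mem_filter.mpr ⟨Finset.mem_univ _, hi⟩⟩)
  have hi0 : accepts gisAlg (gnGraph n) φ i0 ≠ accepts almostGisAlg (gnGraph n) φ i0 :=
    (Finset.mem_filter.mp hi0mem).2
  have hagree : ∀ j, j < i0 →
      accepts gisAlg (gnGraph n) φ j = accepts almostGisAlg (gnGraph n) φ j := by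
    intro j hj
    by_contra hne
    exact absurd (hi0min j (Finset.mem_filter.mpr ⟨Finset.mem_univ _, hne⟩)) (not_le.mpr hj)
  have hg : accepts gisAlg (gnGraph n) φ i0 = true := by
    by_contra hgf
    have h1 : ¬ (∀ j, j < i0 → accepts gisAlg (gnGraph n) φ j = true →
        ¬ (gnGraph n).Adj (φ j) (φ i0)) := by
      intro hc; exact hgf ((accepts_gis_iff (gnGraph n) φ i0).mpr hc)
    push_neg at h1
    obtain ⟨j, hj, hjacc, hjadj⟩ := h1
    have h2 : accepts almostGisAlg (gnGraph n) φ i0 ≠ true := by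
      intro hat
      exact ((accepts_almost_iff (gnGraph n) φ i0).mp hat).1 j hj
        (by rw [← hagree j hj]; exact hjacc) hjadj
    have hgf' : accepts gisAlg (gnGraph n) φ i0 = false := by
      cases h : accepts gisAlg (gnGraph n) φ i0
      · rfl
      · exact absurd h hgf
    have h2' : accepts almostGisAlg (gnGraph n) φ i0 = false := by
      cases h : accepts almostGisAlg (gnGraph n) φ i0
      · rfl
      · exact absurd h h2
    exact hi0 (hgf'.trans h2'.symm)
  have ha : accepts almostGisAlg (gnGraph n) φ i0 = false := by
    cases hA : accepts almostGisAlg (gnGraph n) φ i0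
    · rfl
    · exact absurd (hg.trans hA.symm) hi0
  have hC1 : ∀ j, j < i0 → accepts almostGisAlg (gnGraph n) φ j = true →
      ¬ (gnGraph n).Adj (φ j) (φ i0) := by
    intro j hj hjacc
    exact (accepts_gis_iff (gnGraph n) φ i0).mp hg j hj (by rw [hagree j hj]; exact hjacc)
  have hC2 : ¬ (∀ j k, j < i0 → k < i0 → (gnGraph n).Adj (φ j) (φ i0) →
      (gnGraph n).Adj (φ k) (φ i0) → j = k) := by
    intro hc
    have h3 := (accepts_almost_iff (gnGraph n) φ i0).mpr ⟨hC1, hc⟩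
    rw [ha] at h3; exact Bool.false_ne_true h3
  push_neg at hC2
  obtain ⟨j, k, hj, hk, hadjj, hadjk, hjk⟩ := hC2
  have hz : φ i0 = zv n := by
    rcases vertex_cases (φ i0) with ⟨m, hm⟩ | ⟨m, hm⟩ | ⟨m, hm⟩ | hm
    · exfalso
      rw [hm] at hadjj hadjk
      have e1 : φ j = yv n m := (adj_x m (φ j)).mp hadjj.symm
      have e2 : φ k = yv n m := (adj_x m (φ k)).mp hadjk.symm
      exact hjk (φ.injective (e1.trans e2.symm))
    · exfalso
      rw [hm] at hadjj hadjk
      have e1 := (adj_y m (φ j)).mp hadjj.symm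
      have e2 := (adj_y m (φ k)).mp hadjk.symm
      have hx : ∃ l, l < i0 ∧ φ l = xv n m := by
        rcases e1 with e1 | e1
        · exact ⟨j, hj, e1⟩
        · rcases e2 with e2 | e2
          · exact ⟨k, hk, e2⟩
          · exact absurd (φ.injective (e1.trans e2.symm)) hjk
      obtain ⟨l, hl, hlx⟩ := hx
      have hlf : accepts gisAlg (gnGraph n) φ l ≠ true := by
        intro hlt
        exact (accepts_gis_iff (gnGraph n) φ i0).mp hg l hl hlt
          (by rw [hlx, hm]; exact (adj_x m _).mpr rfl)
      apply hlf
      rw [accepts_gis_iff]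
      intro l2 hl2 hacc2 hadj2
      rw [hlx] at hadj2
      have e3 : φ l2 = yv n m := (adj_x m (φ l2)).mp hadj2.symm
      have e4 : l2 = i0 := φ.injective (e3.trans hm.symm)
      rw [e4] at hl2
      exact absurd (hl2.trans hl) (lt_irrefl i0)
    · exfalso
      rw [hm] at hadjj hadjk
      have e1 : φ j = zv n := (adj_u m (φ j)).mp hadjj.symm
      have e2 : φ k = zv n := (adj_u m (φ k)).mp hadjk.symm
      exact hjk (φ.injective (e1.trans e2.symm))
    · exact hm
  have hi0z : φ.symm (zv n) = i0 := by rw [← hz]; simp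
  -- GIS accepted set has at most n + 1 elements
  have hindA : IsIndep (gnGraph n) (acceptedSet gisAlg (gnGraph n) φ) :=
    indep_of_rec _ _ _ (fun i hi j hj2 hjacc =>
      (accepts_gis_iff (gnGraph n) φ i).mp hi j hj2 hjacc)
  have hzA : zv n ∈ acceptedSet gisAlg (gnGraph n) φ := by
    rw [mem_acceptedSet_iff, hi0z]; exact hg
  have hAsub : acceptedSet gisAlg (gnGraph n) φ ⊆
      insert (zv n) (Finset.univ.image (fun i : Fin n => xv n i)) := by
    intro v hv
    rcases vertex_cases v with ⟨m, hm⟩ | ⟨m, hm⟩ | ⟨m, hm⟩ | hm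
    · subst hm
      exact Finset.mem_insert_of_mem (Finset.mem_image.mpr ⟨m, Finset.mem_univ _, rfl⟩)
    · exact absurd ((adj_z v).mpr (Or.inl ⟨m, hm⟩)) (hindA _ hzA _ hv)
    · exact absurd ((adj_z v).mpr (Or.inr ⟨m, hm⟩)) (hindA _ hzA _ hv)
    · subst hm; exact Finset.mem_insert_self _ _
  have hcardA : (acceptedSet gisAlg (gnGraph n) φ).card ≤ n + 1 := by
    have h4 := Finset.card_le_card hAsub
    have h5 := Finset.card_insert_le (zv n) (Finset.univ.image (fun i : Fin n => xv n i))
    have h6 : (Finset.univ.image (fun i : Fin n => xv n i)).card ≤ n := by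
      simpa using Finset.card_image_le (s := (Finset.univ : Finset (Fin n)))
        (f := fun i => xv n i)
    omega
  -- Almost-GIS accepted set has at least 2n elements
  have hu : ∀ m : Fin n, uv n m ∈ acceptedSet almostGisAlg (gnGraph n) φ := by
    intro m
    rw [mem_acceptedSet_iff, accepts_almost_iff]
    refine ⟨?_, ?_⟩
    · intro j2 hj2 hjacc hadj
      rw [Equiv.apply_symm_apply] at hadj
      have e1 : φ j2 = zv n := (adj_u m (φ j2)).mp hadj.symm
      have e2 : j2 = i0 := φ.injective (e1.trans hz.symm)
      rw [e2, ha] at hjacc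
      exact Bool.false_ne_true hjacc
    · intro j2 k2 hj2 hk2 hadjj2 hadjk2
      rw [Equiv.apply_symm_apply] at hadjj2 hadjk2
      have e1 : φ j2 = zv n := (adj_u m (φ j2)).mp hadjj2.symm
      have e2 : φ k2 = zv n := (adj_u m (φ k2)).mp hadjk2.symm
      exact φ.injective (e1.trans e2.symm)
  have hxy : ∀ m : Fin n, yv n m ∉ acceptedSet almostGisAlg (gnGraph n) φ →
      xv n m ∈ acceptedSet almostGisAlg (gnGraph n) φ := by
    intro m hym
    rw [mem_acceptedSet_iff, accepts_almost_iff]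
    refine ⟨?_, ?_⟩
    · intro j2 hj2 hjacc hadj
      rw [Equiv.apply_symm_apply] at hadj
      have e1 : φ j2 = yv n m := (adj_x m (φ j2)).mp hadj.symm
      apply hym
      rw [mem_acceptedSet_iff, ← e1]
      simpa using hjacc
    · intro j2 k2 hj2 hk2 hadjj2 hadjk2
      rw [Equiv.apply_symm_apply] at hadjj2 hadjk2
      have e1 : φ j2 = yv n m := (adj_x m (φ j2)).mp hadjj2.symm
      have e2 : φ k2 = yv n m := (adj_x m (φ k2)).mp hadjk2.symm
      exact φ.injective (e1.trans e2.symm)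
  have hginj : ∀ a b : Fin n,
      (if yv n a ∈ acceptedSet almostGisAlg (gnGraph n) φ then yv n a else xv n a) =
      (if yv n b ∈ acceptedSet almostGisAlg (gnGraph n) φ then yv n b else xv n b) →
      a = b := by
    intro a b hab
    by_cases h1 : yv n a ∈ acceptedSet almostGisAlg (gnGraph n) φ <;>
      by_cases h2 : yv n b ∈ acceptedSet almostGisAlg (gnGraph n) φ
    · rw [if_pos h1, if_pos h2] at hab; simpa [yv] using hab
    · rw [if_pos h1, if_neg h2] at hab; simp [yv, xv] at hab
    · rw [if_neg h1, if_pos h2] at hab; simp [yv, xv] at hab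
    · rw [if_neg h1, if_neg h2] at hab; simpa [xv] using hab
  have hU : (Finset.univ.image (fun m : Fin n => uv n m)).card = n := by
    rw [Finset.card_image_of_injective _ (fun a b hab => by simpa [uv] using hab)]
    simp
  have hW : (Finset.univ.image (fun m : Fin n =>
      if yv n m ∈ acceptedSet almostGisAlg (gnGraph n) φ then yv n m else xv n m)).card = n := by
    rw [Finset.card_image_of_injective _ (fun a b hab => hginj a b hab)]
    simp
  have hdisj : Disjoint (Finset.univ.image (fun m : Fin n => uv n m))
      (Finset.univ.image (fun m : Fin n =>
        if yv n m ∈ acceptedSet almostGisAlg (gnGraph n) φ then yv n m else xv n m)) := by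
    rw [Finset.disjoint_left]
    intro v hvU hvW
    obtain ⟨a, _, rfl⟩ := Finset.mem_image.mp hvU
    obtain ⟨b, _, hb⟩ := Finset.mem_image.mp hvW
    by_cases h2 : yv n b ∈ acceptedSet almostGisAlg (gnGraph n) φ
    · rw [if_pos h2] at hb; simp [uv, yv] at hb
    · rw [if_neg h2] at hb; simp [uv, xv] at hb
  have hsubB : (Finset.univ.image (fun m : Fin n => uv n m)) ∪
      (Finset.univ.image (fun m : Fin n =>
        if yv n m ∈ acceptedSet almostGisAlg (gnGraph n) φ then yv n m else xv n m)) ⊆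
      acceptedSet almostGisAlg (gnGraph n) φ := by
    intro v hv
    rcases Finset.mem_union.mp hv with hv | hv
    · obtain ⟨a, _, rfl⟩ := Finset.mem_image.mp hv; exact hu a
    · obtain ⟨b, _, rfl⟩ := Finset.mem_image.mp hv
      by_cases h2 : yv n b ∈ acceptedSet almostGisAlg (gnGraph n) φ
      · rw [if_pos h2]; exact h2
      · rw [if_neg h2]; exact hxy b h2
  have hcardB : 2 * n ≤ (acceptedSet almostGisAlg (gnGraph n) φ).card := by
    have h7 := Finset.card_le_card hsubB
    rw [Finset.card_union_of_disjoint hdisj, hU, hW] at h7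
    omega
  omega


lemma setValue_ne' {α β : Type*} [DecidableEq α] (f : α ≃ β) (a x : α) (b : β)
    (h1 : x ≠ a) (h2 : f x ≠ b) : f.setValue a b x = f x := by
  have h3 : x ≠ f.symm b := fun h => h2 (by rw [h, Equiv.apply_symm_apply])
  simp [Equiv.setValue, Equiv.swap_apply_of_ne_of_ne h1 h3]

lemma part1 (n : ℕ) (hn : 2 ≤ n) (φ : Fin (Fintype.card (GnVertex n)) ≃ GnVertex n) :
    IsIndep (gnGraph n) (acceptedSet gisAlg (gnGraph n) φ) ∧
      IsIndep (gnGraph n) (acceptedSet almostGisAlg (gnGraph n) φ) ∧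
      (acceptedSet gisAlg (gnGraph n) φ).card ≤
        (acceptedSet almostGisAlg (gnGraph n) φ).card := by
  refine ⟨indep_of_rec _ _ _ (fun i hi j hj hjacc =>
      (accepts_gis_iff (gnGraph n) φ i).mp hi j hj hjacc),
    indep_of_rec _ _ _ (fun i hi j hj hjacc =>
      ((accepts_almost_iff (gnGraph n) φ i).mp hi).1 j hj hjacc), ?_⟩
  by_cases hdiv : ∃ i, accepts gisAlg (gnGraph n) φ i ≠ accepts almostGisAlg (gnGraph n) φ i
  · exact le_of_lt (key n hn φ hdiv)
  · push_neg at hdiv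
    have : acceptedSet gisAlg (gnGraph n) φ = acceptedSet almostGisAlg (gnGraph n) φ := by
      ext v
      rw [mem_acceptedSet_iff, mem_acceptedSet_iff, hdiv (φ.symm v)]
    rw [this]

lemma part2 (n : ℕ) (hn : 2 ≤ n) :
    ∃ φ : Fin (Fintype.card (GnVertex n)) ≃ GnVertex n,
      (acceptedSet gisAlg (gnGraph n) φ).card <
        (acceptedSet almostGisAlg (gnGraph n) φ).card := by
  classical
  have hN : Fintype.card (GnVertex n) = n + (n + n) + 1 := by simp [Fintype.card_sum]
  have h0n : 0 < n := by omega
  have h1n : 1 < n := by omega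
  obtain ⟨p0, hp0⟩ : ∃ p : Fin (Fintype.card (GnVertex n)), p.val = 0 := ⟨⟨0, by omega⟩, rfl⟩
  obtain ⟨p1, hp1⟩ : ∃ p : Fin (Fintype.card (GnVertex n)), p.val = 1 := ⟨⟨1, by omega⟩, rfl⟩
  obtain ⟨p2, hp2⟩ : ∃ p : Fin (Fintype.card (GnVertex n)), p.val = 2 := ⟨⟨2, by omega⟩, rfl⟩
  obtain ⟨p3, hp3⟩ : ∃ p : Fin (Fintype.card (GnVertex n)), p.val = 3 := ⟨⟨3, by omega⟩, rfl⟩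
  obtain ⟨p4, hp4⟩ : ∃ p : Fin (Fintype.card (GnVertex n)), p.val = 4 := ⟨⟨4, by omega⟩, rfl⟩
  obtain ⟨v0, hv0⟩ : ∃ v : GnVertex n, v = xv n ⟨0, h0n⟩ := ⟨_, rfl⟩
  obtain ⟨v1, hv1⟩ : ∃ v : GnVertex n, v = yv n ⟨0, h0n⟩ := ⟨_, rfl⟩
  obtain ⟨v2, hv2⟩ : ∃ v : GnVertex n, v = xv n ⟨1, h1n⟩ := ⟨_, rfl⟩
  obtain ⟨v3, hv3⟩ : ∃ v : GnVertex n, v = yv n ⟨1, h1n⟩ := ⟨_, rfl⟩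
  obtain ⟨v4, hv4⟩ : ∃ v : GnVertex n, v = zv n := ⟨_, rfl⟩
  have hv01 : v0 ≠ v1 := by simp [hv0, hv1, xv, yv]
  have hv02 : v0 ≠ v2 := by simp [hv0, hv2, xv, Fin.ext_iff]
  have hv03 : v0 ≠ v3 := by simp [hv0, hv3, xv, yv]
  have hv04 : v0 ≠ v4 := by simp [hv0, hv4, xv, zv]
  have hv12 : v1 ≠ v2 := by simp [hv1, hv2, xv, yv]
  have hv13 : v1 ≠ v3 := by simp [hv1, hv3, yv, Fin.ext_iff]
  have hv14 : v1 ≠ v4 := by simp [hv1, hv4, yv, zv]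
  have hv23 : v2 ≠ v3 := by simp [hv2, hv3, xv, yv]
  have hv24 : v2 ≠ v4 := by simp [hv2, hv4, xv, zv]
  have hv34 : v3 ≠ v4 := by simp [hv3, hv4, yv, zv]
  have hq01 : p0 ≠ p1 := by rw [Ne, Fin.ext_iff, hp0, hp1]; omega
  have hq02 : p0 ≠ p2 := by rw [Ne, Fin.ext_iff, hp0, hp2]; omega
  have hq03 : p0 ≠ p3 := by rw [Ne, Fin.ext_iff, hp0, hp3]; omega
  have hq04 : p0 ≠ p4 := by rw [Ne, Fin.ext_iff, hp0, hp4]; omega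
  have hq12 : p1 ≠ p2 := by rw [Ne, Fin.ext_iff, hp1, hp2]; omega
  have hq13 : p1 ≠ p3 := by rw [Ne, Fin.ext_iff, hp1, hp3]; omega
  have hq14 : p1 ≠ p4 := by rw [Ne, Fin.ext_iff, hp1, hp4]; omega
  have hq23 : p2 ≠ p3 := by rw [Ne, Fin.ext_iff, hp2, hp3]; omega
  have hq24 : p2 ≠ p4 := by rw [Ne, Fin.ext_iff, hp2, hp4]; omega
  have hq34 : p3 ≠ p4 := by rw [Ne, Fin.ext_iff, hp3, hp4]; omega
  obtain ⟨e0, -⟩ : ∃ e : Fin (Fintype.card (GnVertex n)) ≃ GnVertex n, True :=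
    ⟨(Fintype.equivFin (GnVertex n)).symm, trivial⟩
  obtain ⟨e1, he1⟩ : ∃ e, e = e0.setValue p0 v0 := ⟨_, rfl⟩
  obtain ⟨e2, he2⟩ : ∃ e, e = e1.setValue p1 v1 := ⟨_, rfl⟩
  obtain ⟨e3, he3⟩ : ∃ e, e = e2.setValue p2 v2 := ⟨_, rfl⟩
  obtain ⟨e4, he4⟩ : ∃ e, e = e3.setValue p3 v3 := ⟨_, rfl⟩
  obtain ⟨φ, heφ⟩ : ∃ e, e = e4.setValue p4 v4 := ⟨_, rfl⟩
  have f10 : e1 p0 = v0 := by rw [he1]; exact Equiv.setValue_eq _ _ _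
  have f21 : e2 p1 = v1 := by rw [he2]; exact Equiv.setValue_eq _ _ _
  have f20 : e2 p0 = v0 := by rw [he2, setValue_ne' _ _ _ _ hq01 (f10 ▸ hv01)]; exact f10
  have f32 : e3 p2 = v2 := by rw [he3]; exact Equiv.setValue_eq _ _ _
  have f30 : e3 p0 = v0 := by rw [he3, setValue_ne' _ _ _ _ hq02 (f20 ▸ hv02)]; exact f20
  have f31 : e3 p1 = v1 := by rw [he3, setValue_ne' _ _ _ _ hq12 (f21 ▸ hv12)]; exact f21
  have f43 : e4 p3 = v3 := by rw [he4]; exact Equiv.setValue_eq _ _ _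
  have f40 : e4 p0 = v0 := by rw [he4, setValue_ne' _ _ _ _ hq03 (f30 ▸ hv03)]; exact f30
  have f41 : e4 p1 = v1 := by rw [he4, setValue_ne' _ _ _ _ hq13 (f31 ▸ hv13)]; exact f31
  have f42 : e4 p2 = v2 := by rw [he4, setValue_ne' _ _ _ _ hq23 (f32 ▸ hv23)]; exact f32
  have g4 : φ p4 = v4 := by rw [heφ]; exact Equiv.setValue_eq _ _ _
  have g0 : φ p0 = v0 := by rw [heφ, setValue_ne' _ _ _ _ hq04 (f40 ▸ hv04)]; exact f40
  have g1 : φ p1 = v1 := by rw [heφ, setValue_ne' _ _ _ _ hq14 (f41 ▸ hv14)]; exact f41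
  have g2 : φ p2 = v2 := by rw [heφ, setValue_ne' _ _ _ _ hq24 (f42 ▸ hv24)]; exact f42
  have g3 : φ p3 = v3 := by rw [heφ, setValue_ne' _ _ _ _ hq34 (f43 ▸ hv34)]; exact f43
  -- adjacency facts
  have a01 : (gnGraph n).Adj v0 v1 := by rw [hv0, hv1]; exact (adj_x _ _).mpr rfl
  have a23 : (gnGraph n).Adj v2 v3 := by rw [hv2, hv3]; exact (adj_x _ _).mpr rfl
  have a14 : (gnGraph n).Adj v1 v4 := by rw [hv1, hv4]; exact (adj_y _ _).mpr (Or.inr rfl)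
  have a34 : (gnGraph n).Adj v3 v4 := by rw [hv3, hv4]; exact (adj_y _ _).mpr (Or.inr rfl)
  have na02 : ¬ (gnGraph n).Adj v0 v2 := by rw [hv0, hv2, adj_x]; simp [xv, yv]
  have na04 : ¬ (gnGraph n).Adj v0 v4 := by rw [hv0, hv4, adj_x]; simp [zv, yv]
  have na24 : ¬ (gnGraph n).Adj v2 v4 := by rw [hv2, hv4, adj_x]; simp [zv, yv]
  -- GIS run
  have hg0 : accepts gisAlg (gnGraph n) φ p0 = true := by
    rw [accepts_gis_iff]
    intro j hj hacc hadj
    have hjv : j.val < p0.val := hj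
    rw [hp0] at hjv
    omega
  have hg1 : accepts gisAlg (gnGraph n) φ p1 = false := by
    cases hc : accepts gisAlg (gnGraph n) φ p1
    · rfl
    · have h := (accepts_gis_iff (gnGraph n) φ p1).mp hc p0
        (by show p0.val < p1.val; omega) hg0
      rw [g0, g1] at h
      exact absurd a01 h
  have hg2 : accepts gisAlg (gnGraph n) φ p2 = true := by
    rw [accepts_gis_iff]
    intro j hj hacc hadj
    have hjv : j.val < p2.val := hj
    rw [hp2] at hjv
    rcases (by omega : j.val = 0 ∨ j.val = 1) with h | h
    · have hj0 : j = p0 := by rw [Fin.ext_iff, hp0]; omega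
      rw [hj0, g0, g2] at hadj
      exact na02 hadj
    · have hj1 : j = p1 := by rw [Fin.ext_iff, hp1]; omega
      rw [hj1, hg1] at hacc
      exact Bool.false_ne_true hacc
  have hg3 : accepts gisAlg (gnGraph n) φ p3 = false := by
    cases hc : accepts gisAlg (gnGraph n) φ p3
    · rfl
    · have h := (accepts_gis_iff (gnGraph n) φ p3).mp hc p2
        (by show p2.val < p3.val; omega) hg2
      rw [g2, g3] at h
      exact absurd a23 h
  have hg4 : accepts gisAlg (gnGraph n) φ p4 = true := by
    rw [accepts_gis_iff]
    intro j hj hacc hadj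
    have hjv : j.val < p4.val := hj
    rw [hp4] at hjv
    rcases (by omega : j.val = 0 ∨ j.val = 1 ∨ j.val = 2 ∨ j.val = 3) with h | h | h | h
    · have hj0 : j = p0 := by rw [Fin.ext_iff, hp0]; omega
      rw [hj0, g0, g4] at hadj
      exact na04 hadj
    · have hj1 : j = p1 := by rw [Fin.ext_iff, hp1]; omega
      rw [hj1, hg1] at hacc
      exact Bool.false_ne_true hacc
    · have hj2 : j = p2 := by rw [Fin.ext_iff, hp2]; omega
      rw [hj2, g2, g4] at hadj
      exact na24 hadj
    · have hj3 : j = p3 := by rw [Fin.ext_iff, hp3]; omega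
      rw [hj3, hg3] at hacc
      exact Bool.false_ne_true hacc
  -- Almost-GIS rejects z at position 4
  have ha4 : accepts almostGisAlg (gnGraph n) φ p4 = false := by
    cases hc : accepts almostGisAlg (gnGraph n) φ p4
    · rfl
    · have h := ((accepts_almost_iff (gnGraph n) φ p4).mp hc).2 p1 p3
        (by show p1.val < p4.val; omega) (by show p3.val < p4.val; omega)
        (by rw [g1, g4]; exact a14) (by rw [g3, g4]; exact a34)
      exact absurd h hq13
  exact ⟨φ, key n hn φ ⟨p4, by rw [hg4, ha4]; simp⟩⟩

end Gn

/-- for `n ≥ 2`, on the graph `G_n` both `GIS` and `Almost-GIS` always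
produce independent sets, on every ordering `Almost-GIS` accepts at least as many vertices
as `GIS`, and on some ordering `Almost-GIS` accepts strictly more vertices than `GIS`. -/
theorem statement17 (n : ℕ) (hn : 2 ≤ n) :
    (∀ φ : Fin (Fintype.card (GnVertex n)) ≃ GnVertex n,
        IsIndep (gnGraph n) (acceptedSet gisAlg (gnGraph n) φ) ∧
        IsIndep (gnGraph n) (acceptedSet almostGisAlg (gnGraph n) φ) ∧
        (acceptedSet gisAlg (gnGraph n) φ).card ≤
          (acceptedSet almostGisAlg (gnGraph n) φ).card) ∧
      (∃ φ : Fin (Fintype.card (GnVertex n)) ≃ GnVertex n,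
        (acceptedSet gisAlg (gnGraph n) φ).card <
          (acceptedSet almostGisAlg (gnGraph n) φ).card) := by
  exact ⟨fun φ => part1 n hn φ, part2 n hn⟩

end OnlinePaper
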